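/- Let P be a symmetric positive definite n×n real matrix and Q satisfy Q + Q^T = diag(-1,0,...,0,1). If u : ℝ → ℝ^n solves the ODE u'(t) = -P⁻¹ Q u(t), then the energy E(t) = u(t)^T P u(t) satisfies E'(t) = u_0(t)^2 - u_{n-1}(t)^2. -/

import Mathlib

open Matrix

lemma quad_hasDerivAt {m : ℕ} (A : Matrix (Fin m) (Fin m) ℝ)
    (u : ℝ → (Fin m → ℝ)) (u' : Fin m → ℝ) (t : ℝ)
    (hu : HasDerivAt u u' t) :
    HasDerivAt (fun s => u s ⬝ᵥ A.mulVec (u s))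
      (u' ⬝ᵥ A.mulVec (u t) + u t ⬝ᵥ A.mulVec u') t := by
  have hcomp : ∀ i, HasDerivAt (fun s => u s i) (u' i) t := hasDerivAt_pi.1 hu
  have hmv : ∀ i, HasDerivAt (fun s => A.mulVec (u s) i) (A.mulVec u' i) t := by
    intro i
    simp only [Matrix.mulVec, dotProduct]
    exact HasDerivAt.fun_sum fun j _ => (hcomp j).const_mul (A i j)
  have : HasDerivAt (fun s => ∑ i, u s i * A.mulVec (u s) i)
      (∑ i, (u' i * A.mulVec (u t) i + u t i * A.mulVec u' i)) t :=
    HasDerivAt.fun_sum fun i _ => (hcomp i).mul (hmv i)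
  simpa [dotProduct, Finset.sum_add_distrib] using this

theorem sbp_energy_rate (n : ℕ) (P Q : Matrix (Fin (n + 2)) (Fin (n + 2)) ℝ)
    (hP : P.PosDef)
    (hQ : Q + Qᵀ = Matrix.diagonal (fun i =>
      if i = 0 then (-1 : ℝ) else if i = Fin.last (n + 1) then 1 else 0))
    (u : ℝ → (Fin (n + 2) → ℝ))
    (hu : ∀ t, HasDerivAt u (-(P⁻¹ * Q).mulVec (u t)) t) :
    ∀ t, HasDerivAt (fun s => u s ⬝ᵥ P.mulVec (u s))
      (u t 0 ^ 2 - u t (Fin.last (n + 1)) ^ 2) t := by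
  intro t
  have hPt : Pᵀ = P := by
    have := hP.1.eq
    simpa [Matrix.conjTranspose_eq_transpose_of_trivial] using this
  have hdet : IsUnit P.det := isUnit_iff_ne_zero.2 (ne_of_gt hP.det_pos)
  have key := quad_hasDerivAt P u (-(P⁻¹ * Q).mulVec (u t)) t (hu t)
  convert key using 1
  have h1 : (-(P⁻¹ * Q).mulVec (u t)) ⬝ᵥ P.mulVec (u t)
      = -(u t ⬝ᵥ Qᵀ.mulVec (u t)) := by
    rw [neg_dotProduct]
    congr 1
    rw [dotProduct_comm, dotProduct_mulVec, ← Matrix.vecMul_transpose,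
        Matrix.vecMul_vecMul, hPt, ← Matrix.mul_assoc,
        Matrix.mul_nonsing_inv P hdet, Matrix.one_mul,
        Matrix.mulVec_transpose, dotProduct_comm]
  have h2 : u t ⬝ᵥ P.mulVec (-(P⁻¹ * Q).mulVec (u t))
      = -(u t ⬝ᵥ Q.mulVec (u t)) := by
    rw [Matrix.mulVec_neg, dotProduct_neg]
    congr 1
    rw [Matrix.mulVec_mulVec, ← Matrix.mul_assoc,
        Matrix.mul_nonsing_inv P hdet, Matrix.one_mul]
  rw [h1, h2]
  have : u t ⬝ᵥ Qᵀ.mulVec (u t) + u t ⬝ᵥ Q.mulVec (u t)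
      = u t ⬝ᵥ (Q + Qᵀ).mulVec (u t) := by
    rw [Matrix.add_mulVec, dotProduct_add]; ring
  have hsum : u t ⬝ᵥ (Q + Qᵀ).mulVec (u t)
      = -(u t 0 ^ 2) + u t (Fin.last (n + 1)) ^ 2 := by
    rw [hQ]
    simp only [dotProduct, Matrix.mulVec_diagonal]
    rw [show (∑ i, u t i * ((if i = 0 then (-1:ℝ) else if i = Fin.last (n+1) then 1 else 0) * u t i))
        = ∑ i, ((if i = 0 then -(u t i ^ 2) else 0) + (if i = Fin.last (n+1) then u t i ^ 2 else 0))
      from Finset.sum_congr rfl fun i _ => by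
        by_cases h0 : i = 0
        · have : i ≠ Fin.last (n+1) := by
            subst h0; simp [Fin.ext_iff, Fin.last]
          simp [h0, this]; ring
        · by_cases hl : i = Fin.last (n+1)
          · simp [h0, hl]; ring
          · simp [h0, hl]]
    rw [Finset.sum_add_distrib, Finset.sum_ite_eq' Finset.univ (0 : Fin (n+2)),
        Finset.sum_ite_eq' Finset.univ (Fin.last (n+1))]
    simp
  linarith [hsum, this]
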